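/- Let η be a self-joining of a measure-preserving transformation T of (X,μ), Φ_η its Markov operator, and 𝔄 a T-invariant sub-σ-algebra of 𝔅. Then Φ_η f = f for every f ∈ L²(𝔄) if and only if the restriction of η to 𝔄⊗𝔄 equals the diagonal measure Δ_𝔄 given by Δ_𝔄(A₁×A₂) = μ(A₁ ∩ A₂) for A₁, A₂ ∈ 𝔄. -/

import Mathlib

open MeasureTheory

noncomputable section

namespace MarkovDiagonalAux

local notation "⟪" x ", " y "⟫" => @inner ℂ _ _ x y

variable {X : Type*} {m : MeasurableSpace X} [m₀ : MeasurableSpace X]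

lemma prod_mono_aux (hm : m ≤ m₀) : m.prod m ≤ m₀.prod m₀ :=
  sup_le_sup (MeasurableSpace.comap_mono hm) (MeasurableSpace.comap_mono hm)

lemma trim_eq_aux (hm : m ≤ m₀) (μ : Measure X) [IsProbabilityMeasure μ]
    (η : Measure (X × X)) [IsProbabilityMeasure η]
    (hD : ∀ A B : Set X, MeasurableSet[m] A → MeasurableSet[m] B → η (A ×ˢ B) = μ (A ∩ B)) :
    η.trim (prod_mono_aux hm) = (μ.map (fun x => (x, x))).trim (prod_mono_aux hm) := by
  have hdiag : Measurable (fun x : X => (x, x)) := measurable_id.prodMk measurable_id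
  refine ext_of_generate_finite _ (@generateFrom_prod X X m m).symm (@isPiSystem_prod X X m m)
    ?_ ?_
  · rintro s ⟨A, hA, B, hB, rfl⟩
    have hAB : MeasurableSet[m.prod m] (A ×ˢ B) := @MeasurableSet.prod X X m m _ _ hA hB
    rw [trim_measurableSet_eq _ hAB, trim_measurableSet_eq _ hAB, hD A B hA hB,
      Measure.map_apply hdiag ((hm _ hA).prod (hm _ hB))]
    have hpre : (fun x : X => (x, x)) ⁻¹' (A ×ˢ B) = A ∩ B := by
      ext x; simp [Set.mem_prod]
    rw [hpre]
  · rw [trim_measurableSet_eq _ MeasurableSet.univ, trim_measurableSet_eq _ MeasurableSet.univ,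
      Measure.map_apply hdiag MeasurableSet.univ, Set.preimage_univ]
    simp [measure_univ]

lemma integral_diag_aux (hm : m ≤ m₀) (μ : Measure X) [IsProbabilityMeasure μ]
    (η : Measure (X × X)) [IsProbabilityMeasure η]
    (hmarg₁ : η.map Prod.fst = μ) (hmarg₂ : η.map Prod.snd = μ)
    (hD : ∀ A B : Set X, MeasurableSet[m] A → MeasurableSet[m] B → η (A ×ˢ B) = μ (A ∩ B))
    (f f' : X → ℂ) (hf' : StronglyMeasurable[m] f') (hff' : f =ᵐ[μ] f') :
    ∫ p : X × X, f p.1 * (starRingEnd ℂ) (f p.2) ∂η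
      = ∫ x, f x * (starRingEnd ℂ) (f x) ∂μ := by
  have hdiag : Measurable (fun x : X => (x, x)) := measurable_id.prodMk measurable_id
  have h1 : (f ∘ Prod.fst) =ᵐ[η] (f' ∘ Prod.fst) :=
    ae_eq_comp measurable_fst.aemeasurable (by rwa [hmarg₁])
  have h2 : (f ∘ Prod.snd) =ᵐ[η] (f' ∘ Prod.snd) :=
    ae_eq_comp measurable_snd.aemeasurable (by rwa [hmarg₂])
  have hae : (fun p : X × X => f p.1 * (starRingEnd ℂ) (f p.2)) =ᵐ[η]
      (fun p : X × X => f' p.1 * (starRingEnd ℂ) (f' p.2)) := by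
    filter_upwards [h1, h2] with p e1 e2
    simp only [Function.comp_apply] at e1 e2
    rw [e1, e2]
  have hsm : StronglyMeasurable[m.prod m]
      (fun p : X × X => f' p.1 * (starRingEnd ℂ) (f' p.2)) := by
    have hfst : @Measurable (X × X) X (m.prod m) m Prod.fst := @measurable_fst X X m m
    have hsnd : @Measurable (X × X) X (m.prod m) m Prod.snd := @measurable_snd X X m m
    exact (hf'.comp_measurable hfst).mul
      (RCLike.continuous_conj.comp_stronglyMeasurable (hf'.comp_measurable hsnd))
  rw [integral_congr_ae hae, integral_trim (prod_mono_aux hm) hsm, trim_eq_aux hm μ η hD,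
    ← integral_trim (prod_mono_aux hm) hsm,
    integral_map hdiag.aemeasurable (hsm.mono (prod_mono_aux hm)).aestronglyMeasurable]
  refine integral_congr_ae ?_
  filter_upwards [hff'] with x hx
  simp [hx]

lemma contraction_aux (μ : Measure X) [IsProbabilityMeasure μ]
    (η : Measure (X × X)) [IsProbabilityMeasure η]
    (hmarg₁ : η.map Prod.fst = μ) (hmarg₂ : η.map Prod.snd = μ)
    (f g : Lp ℂ 2 μ)
    (h : ∫ y, (g : X → ℂ) y * (starRingEnd ℂ) ((g : X → ℂ) y) ∂μ =
      ∫ p : X × X, (f : X → ℂ) p.1 * (starRingEnd ℂ) ((g : X → ℂ) p.2) ∂η) :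
    ‖g‖ ≤ ‖f‖ := by
  have hfstMP : MeasurePreserving Prod.fst η μ := ⟨measurable_fst, hmarg₁⟩
  have hsndMP : MeasurePreserving Prod.snd η μ := ⟨measurable_snd, hmarg₂⟩
  set u := Lp.compMeasurePreserving (E := ℂ) (p := 2) Prod.fst hfstMP f with hu
  set v := Lp.compMeasurePreserving (E := ℂ) (p := 2) Prod.snd hsndMP g with hv
  have hg2 : ⟪g, g⟫ = ∫ y, (g : X → ℂ) y * (starRingEnd ℂ) ((g : X → ℂ) y) ∂μ := by
    rw [L2.inner_def]
    simp_rw [RCLike.inner_apply]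
  have hvu : ⟪v, u⟫ = ∫ p : X × X, (f : X → ℂ) p.1 * (starRingEnd ℂ) ((g : X → ℂ) p.2) ∂η := by
    rw [L2.inner_def]
    simp_rw [RCLike.inner_apply]
    refine integral_congr_ae ?_
    filter_upwards [Lp.coeFn_compMeasurePreserving f hfstMP,
      Lp.coeFn_compMeasurePreserving g hsndMP] with p e1 e2
    rw [e1, e2]
    simp only [Function.comp_apply]
  have key : ⟪g, g⟫ = ⟪v, u⟫ := hg2.trans (h.trans hvu.symm)
  have hle2 : ‖g‖ ^ 2 ≤ ‖g‖ * ‖f‖ := by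
    have h1 : ‖g‖ ^ 2 = ‖⟪g, g⟫‖ := by
      rw [inner_self_eq_norm_sq_to_K]
      simp [abs_of_nonneg (norm_nonneg g)]
    rw [h1, key]
    calc ‖⟪v, u⟫‖ ≤ ‖v‖ * ‖u‖ := norm_inner_le_norm _ _
      _ = ‖g‖ * ‖f‖ := by rw [hu, hv, Lp.norm_compMeasurePreserving,
        Lp.norm_compMeasurePreserving]
  rcases eq_or_lt_of_le (norm_nonneg g) with h0 | h0
  · rw [← h0]; exact norm_nonneg f
  · nlinarith [hle2]

lemma mu_rect_aux (μ : Measure X) [IsProbabilityMeasure μ] {A B : Set X}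
    (hA : MeasurableSet A) (hB : MeasurableSet B) {f g : X → ℂ}
    (hfA : f =ᵐ[μ] A.indicator fun _ => 1) (hgB : g =ᵐ[μ] B.indicator fun _ => 1) :
    ∫ y, f y * (starRingEnd ℂ) (g y) ∂μ = ((μ (A ∩ B)).toReal : ℂ) := by
  have hae : (fun y => f y * (starRingEnd ℂ) (g y)) =ᵐ[μ]
      (A ∩ B).indicator fun _ => (1 : ℂ) := by
    filter_upwards [hfA, hgB] with y e1 e2
    rw [e1, e2]
    by_cases h1 : y ∈ A <;> by_cases h2 : y ∈ B <;>
      simp [Set.indicator_apply, h1, h2, Set.mem_inter_iff]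
  rw [integral_congr_ae hae, integral_indicator_const _ (hA.inter hB)]
  simp [Complex.real_smul, measureReal_def]

lemma eta_rect_aux (μ : Measure X) [IsProbabilityMeasure μ]
    (η : Measure (X × X)) [IsProbabilityMeasure η]
    (hmarg₁ : η.map Prod.fst = μ) (hmarg₂ : η.map Prod.snd = μ) {A B : Set X}
    (hA : MeasurableSet A) (hB : MeasurableSet B) {f g : X → ℂ}
    (hfA : f =ᵐ[μ] A.indicator fun _ => 1) (hgB : g =ᵐ[μ] B.indicator fun _ => 1) :
    ∫ p : X × X, f p.1 * (starRingEnd ℂ) (g p.2) ∂η = ((η (A ×ˢ B)).toReal : ℂ) := by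
  have h1 : (f ∘ Prod.fst) =ᵐ[η] ((A.indicator fun _ => (1 : ℂ)) ∘ Prod.fst) :=
    ae_eq_comp measurable_fst.aemeasurable (by rwa [hmarg₁])
  have h2 : (g ∘ Prod.snd) =ᵐ[η] ((B.indicator fun _ => (1 : ℂ)) ∘ Prod.snd) :=
    ae_eq_comp measurable_snd.aemeasurable (by rwa [hmarg₂])
  have hae : (fun p : X × X => f p.1 * (starRingEnd ℂ) (g p.2)) =ᵐ[η]
      (A ×ˢ B).indicator fun _ => (1 : ℂ) := by
    filter_upwards [h1, h2] with p e1 e2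
    simp only [Function.comp_apply] at e1 e2
    rw [e1, e2]
    by_cases hp1 : p.1 ∈ A <;> by_cases hp2 : p.2 ∈ B <;>
      simp [Set.indicator_apply, hp1, hp2, Set.mem_prod]
  rw [integral_congr_ae hae, integral_indicator_const _ (hA.prod hB)]
  simp [Complex.real_smul, measureReal_def]

lemma inner_eq_aux (μ : Measure X) [IsProbabilityMeasure μ] (f g : Lp ℂ 2 μ)
    (h : ∫ y, (g : X → ℂ) y * (starRingEnd ℂ) ((f : X → ℂ) y) ∂μ
        = ∫ x, (f : X → ℂ) x * (starRingEnd ℂ) ((f : X → ℂ) x) ∂μ) :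
    ⟪f, g⟫ = ⟪f, f⟫ := by
  rw [L2.inner_def, L2.inner_def]
  simp_rw [RCLike.inner_apply]
  exact h

end MarkovDiagonalAux

open MarkovDiagonalAux

local notation "⟪" x ", " y "⟫" => @inner ℂ _ _ x y

/-- Let `η` be a self-joining of `T` with Markov operator `Φ`, and let `𝔄` (here `m`) be a
`T`-invariant sub-σ-algebra.  Then `Φ f = f` for every `f ∈ L²(𝔄)` if and only if the
restriction of `η` to `𝔄 ⊗ 𝔄` is the diagonal measure `Δ_𝔄`, i.e.
`η(A₁ × A₂) = μ(A₁ ∩ A₂)` for all `A₁, A₂ ∈ 𝔄`. -/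
theorem markov_fixes_factor_iff_diagonal
    {X : Type*} [m₀ : MeasurableSpace X] (μ : Measure X) [IsProbabilityMeasure μ]
    (T Tinv : X → X) (hT : MeasurePreserving T μ μ) (hTinv : MeasurePreserving Tinv μ μ)
    (hinv₁ : ∀ x, Tinv (T x) = x) (hinv₂ : ∀ x, T (Tinv x) = x)
    (η : Measure (X × X)) [IsProbabilityMeasure η]
    (hη : η.map (Prod.map T T) = η)
    (hmarg₁ : η.map Prod.fst = μ) (hmarg₂ : η.map Prod.snd = μ)
    (Φ : Lp ℂ 2 μ →L[ℂ] Lp ℂ 2 μ)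
    (hΦ : ∀ f g : Lp ℂ 2 μ,
      ∫ y, (Φ f : X → ℂ) y * (starRingEnd ℂ) ((g : X → ℂ) y) ∂μ =
        ∫ p : X × X, (f : X → ℂ) p.1 * (starRingEnd ℂ) ((g : X → ℂ) p.2) ∂η)
    (m : MeasurableSpace X) (hm : m ≤ m₀)
    (hminv : ∀ A : Set X, MeasurableSet[m] A → MeasurableSet[m] (T ⁻¹' A)) :
    (∀ f : Lp ℂ 2 μ, AEStronglyMeasurable[m] (f : X → ℂ) μ → Φ f = f) ↔
      ∀ A B : Set X, MeasurableSet[m] A → MeasurableSet[m] B →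
        η (A ×ˢ B) = μ (A ∩ B) := by
  constructor
  · intro hfix A B hA hB
    have hA₀ : MeasurableSet[m₀] A := hm A hA
    have hB₀ : MeasurableSet[m₀] B := hm B hB
    set fA : Lp ℂ 2 μ := indicatorConstLp 2 hA₀ (measure_ne_top μ A) (1 : ℂ) with hfAdef
    set fB : Lp ℂ 2 μ := indicatorConstLp 2 hB₀ (measure_ne_top μ B) (1 : ℂ) with hfBdef
    have hconst : StronglyMeasurable[m] (fun _ : X => (1 : ℂ)) :=
      @stronglyMeasurable_const X ℂ m _ _
    have hmA : AEStronglyMeasurable[m] (fA : X → ℂ) μ :=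
      ⟨A.indicator fun _ => 1, hconst.indicator hA, indicatorConstLp_coeFn⟩
    have key := hΦ fA fB
    rw [hfix fA hmA] at key
    have hL : ∫ y, (fA : X → ℂ) y * (starRingEnd ℂ) ((fB : X → ℂ) y) ∂μ =
        ((μ (A ∩ B)).toReal : ℂ) :=
      mu_rect_aux (m₀ := m₀) μ hA₀ hB₀ indicatorConstLp_coeFn indicatorConstLp_coeFn
    have hR : ∫ p : X × X, (fA : X → ℂ) p.1 * (starRingEnd ℂ) ((fB : X → ℂ) p.2) ∂η =
        ((η (A ×ˢ B)).toReal : ℂ) :=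
      eta_rect_aux (m₀ := m₀) μ η hmarg₁ hmarg₂ hA₀ hB₀ indicatorConstLp_coeFn
        indicatorConstLp_coeFn
    rw [hL, hR] at key
    have hreal : (μ (A ∩ B)).toReal = (η (A ×ˢ B)).toReal := by exact_mod_cast key
    exact (ENNReal.toReal_eq_toReal_iff' (measure_ne_top η _) (measure_ne_top μ _)).mp hreal.symm
  · intro hD f hf
    obtain ⟨f', hf'sm, hff'⟩ := hf
    have hdiagint := integral_diag_aux (m₀ := m₀) hm μ η hmarg₁ hmarg₂ hD (f : X → ℂ) f' hf'sm hff'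
    have hinner : ⟪f, Φ f⟫ = ⟪f, f⟫ :=
      inner_eq_aux (m₀ := m₀) μ f (Φ f) ((hΦ f f).trans hdiagint)
    have hcontr : ‖Φ f‖ ≤ ‖f‖ :=
      contraction_aux (m₀ := m₀) μ η hmarg₁ hmarg₂ f (Φ f) (hΦ f (Φ f))
    have hre : RCLike.re ⟪Φ f, f⟫ = ‖f‖ ^ 2 := by
      rw [← inner_conj_symm, hinner, inner_conj_symm]
      exact inner_self_eq_norm_sq f
    have hsub : ‖Φ f - f‖ ^ 2 ≤ 0 := by
      rw [norm_sub_sq (𝕜 := ℂ), hre]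
      nlinarith [norm_nonneg (Φ f), norm_nonneg f, hcontr]
    have h0 : Φ f - f = 0 := by
      have hz : ‖Φ f - f‖ ^ 2 = 0 := le_antisymm hsub (sq_nonneg _)
      have hn : ‖Φ f - f‖ = 0 := by nlinarith [norm_nonneg (Φ f - f)]
      exact norm_eq_zero.mp hn
    exact sub_eq_zero.mp h0
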